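/- Let a, b : ℝ → ℝ_{≥0} satisfy ȧ = 2F(a,b)a, ḃ = −2F(a,b)b with F(a,b) = Ȳ − a + b, Ȳ > 0. If F(a(0),b(0)) > 0 and a(0) > 0, then a(t) is strictly increasing and bounded above, b(t) is non-increasing, and (a(t),b(t)) converges to a point (a_ss, b_ss) with a_ss > 0 and F(a_ss, b_ss) = 0. -/

import Mathlib

open Set Filter

/-- If f solves a linear ODE f' = c·f with continuous coefficient and vanishes at p,
then it vanishes at any q ≥ p. -/
private lemma ode_zero_le (f f' c : ℝ → ℝ) (hf : ∀ t, HasDerivAt f (f' t) t)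
    (hc : Continuous c) (heq : ∀ t, f' t = c t * f t) {p q : ℝ} (hpq : p ≤ q)
    (hp : f p = 0) : f q = 0 := by
  obtain ⟨K, hK⟩ := (isCompact_Icc (a := p) (b := q)).exists_bound_of_continuousOn
    hc.continuousOn
  have hcont : Continuous f := by
    rw [continuous_iff_continuousAt]
    exact fun t => (hf t).continuousAt
  have h := norm_le_gronwallBound_of_norm_deriv_right_le (f := f) (f' := f')
    (δ := 0) (K := K) (ε := 0) (a := p) (b := q) hcont.continuousOn
    (fun x _ => (hf x).hasDerivWithinAt)
    (by simp [hp])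
    (fun x hx => by
      rw [heq x, norm_mul, add_zero]
      exact mul_le_mul_of_nonneg_right (hK x (Ico_subset_Icc_self hx)) (norm_nonneg _))
  have h2 := h q ⟨hpq, le_rfl⟩
  rw [gronwallBound_ε0_δ0] at h2
  exact norm_le_zero_iff.mp h2

/-- Same, without the ordering hypothesis. -/
private lemma ode_zero (f f' c : ℝ → ℝ) (hf : ∀ t, HasDerivAt f (f' t) t)
    (hc : Continuous c) (heq : ∀ t, f' t = c t * f t) {p : ℝ}
    (hp : f p = 0) (q : ℝ) : f q = 0 := by
  rcases le_total p q with h | h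
  · exact ode_zero_le f f' c hf hc heq h hp
  · -- reverse time
    have key := ode_zero_le (fun s => f (2 * p - s)) (fun s => f' (2 * p - s) * (-1))
      (fun s => -(c (2 * p - s)))
      (fun s => (hf (2 * p - s)).comp s ((hasDerivAt_id s).const_sub (2 * p)))
      (by continuity) (fun s => by show f' (2 * p - s) * (-1) = _; rw [heq]; ring)
      (show p ≤ 2 * p - q by linarith)
      (by show f (2 * p - p) = 0; rw [show 2 * p - p = p by ring]; exact hp)
    have : f (2 * p - (2 * p - q)) = 0 := key
    rwa [show 2 * p - (2 * p - q) = q by ring] at this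

/-- A continuous nonvanishing function positive at 0 is positive everywhere. -/
private lemma pos_everywhere (f : ℝ → ℝ) (hf : Continuous f) (hne : ∀ t, f t ≠ 0)
    (h0 : 0 < f 0) : ∀ t, 0 < f t := by
  intro t
  rcases lt_or_ge 0 (f t) with h | h
  · exact h
  have h' : f t < 0 := lt_of_le_of_ne h (hne t)
  rcases le_total 0 t with ht | ht
  · obtain ⟨x, _, hfx⟩ := intermediate_value_Icc' ht hf.continuousOn
      (show (0 : ℝ) ∈ Icc (f t) (f 0) from ⟨h'.le, h0.le⟩)
    exact absurd hfx (hne x)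
  · obtain ⟨x, _, hfx⟩ := intermediate_value_Icc ht hf.continuousOn
      (show (0 : ℝ) ∈ Icc (f t) (f 0) from ⟨h'.le, h0.le⟩)
    exact absurd hfx (hne x)

theorem stmt6 (Y : ℝ) (hY : 0 < Y) (a b : ℝ → ℝ)
    (ha0 : ∀ t, 0 ≤ a t) (hb0 : ∀ t, 0 ≤ b t)
    (ha : ∀ t, HasDerivAt a (2 * (Y - a t + b t) * a t) t)
    (hb : ∀ t, HasDerivAt b (-2 * (Y - a t + b t) * b t) t)
    (hF0 : 0 < Y - a 0 + b 0) (hapos : 0 < a 0) :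
    StrictMonoOn a (Set.Ici 0) ∧ (∃ M : ℝ, ∀ t ≥ (0 : ℝ), a t ≤ M) ∧
    AntitoneOn b (Set.Ici 0) ∧
    ∃ ass bss : ℝ, 0 < ass ∧ Y - ass + bss = 0 ∧
      Filter.Tendsto a Filter.atTop (nhds ass) ∧
      Filter.Tendsto b Filter.atTop (nhds bss) := by
  set F : ℝ → ℝ := fun t => Y - a t + b t with hFdef
  have hacont : Continuous a := by
    rw [continuous_iff_continuousAt]; exact fun t => (ha t).continuousAt
  have hbcont : Continuous b := by
    rw [continuous_iff_continuousAt]; exact fun t => (hb t).continuousAt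
  have hFcont : Continuous F := by continuity
  have hF : ∀ t, HasDerivAt F (-2 * (a t + b t) * F t) t := by
    intro t
    have := ((hasDerivAt_const t Y).sub (ha t)).add (hb t)
    refine this.congr_deriv ?_
    simp [hFdef]; ring
  -- F never vanishes
  have hFne : ∀ t, F t ≠ 0 := by
    intro t ht
    have : F 0 = 0 :=
      ode_zero F (fun t => -2 * (a t + b t) * F t) (fun t => -2 * (a t + b t)) hF
        (by continuity) (fun t => rfl) ht 0
    simp only [hFdef] at this
    linarith
  have hFpos : ∀ t, 0 < F t := pos_everywhere F hFcont hFne (by simpa [hFdef] using hF0)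
  -- a never vanishes
  have hane : ∀ t, a t ≠ 0 := by
    intro t ht
    have : a 0 = 0 :=
      ode_zero a (fun t => 2 * (Y - a t + b t) * a t) (fun t => 2 * (Y - a t + b t)) ha
        (by continuity) (fun t => rfl) ht 0
    linarith
  have hapos' : ∀ t, 0 < a t := fun t => lt_of_le_of_ne (ha0 t) (Ne.symm (hane t))
  -- monotonicity
  have hdiffa : Differentiable ℝ a := fun t => (ha t).differentiableAt
  have hdiffb : Differentiable ℝ b := fun t => (hb t).differentiableAt
  have hamono : StrictMono a := by
    apply strictMono_of_deriv_pos
    intro t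
    rw [(ha t).deriv]
    have := hFpos t
    have := hapos' t
    simp only [hFdef] at *
    positivity
  have hbanti : Antitone b := by
    apply antitone_of_deriv_nonpos hdiffb
    intro t
    rw [(hb t).deriv]
    have h1 := hFpos t
    simp only [hFdef] at h1
    nlinarith [hb0 t]
  -- bound
  have hbound : ∀ t ≥ (0 : ℝ), a t ≤ Y + b 0 := by
    intro t ht
    have h1 := hFpos t
    have h2 := hbanti ht
    simp only [hFdef] at h1
    linarith
  have hMa : ∀ t, a t ≤ max (a 0) (Y + b 0) := by
    intro t
    rcases le_total t 0 with ht | ht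
    · exact le_max_of_le_left (hamono.monotone ht)
    · exact le_max_of_le_right (hbound t ht)
  have hMbdd : BddAbove (Set.range a) := ⟨max (a 0) (Y + b 0), by
    rintro x ⟨t, rfl⟩; exact hMa t⟩
  have hbbdd : BddBelow (Set.range b) := ⟨0, by rintro x ⟨t, rfl⟩; exact hb0 t⟩
  set ass : ℝ := ⨆ t, a t with hass
  set bss : ℝ := ⨅ t, b t with hbss
  have haconv : Tendsto a atTop (nhds ass) := tendsto_atTop_ciSup hamono.monotone hMbdd
  have hbconv : Tendsto b atTop (nhds bss) := tendsto_atTop_ciInf hbanti hbbdd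
  have hass_pos : 0 < ass := lt_of_lt_of_le hapos (le_ciSup hMbdd 0)
  have hFconv : Tendsto F atTop (nhds (Y - ass + bss)) :=
    (tendsto_const_nhds.sub haconv).add hbconv
  have hLnonneg : 0 ≤ Y - ass + bss :=
    ge_of_tendsto' hFconv (fun t => (hFpos t).le)
  have hL0 : Y - ass + bss = 0 := by
    by_contra h
    have hL : 0 < Y - ass + bss := lt_of_le_of_ne hLnonneg (Ne.symm h)
    set L := Y - ass + bss with hLdef
    have hev : ∀ᶠ t in atTop, L / 2 < F t :=
      hFconv.eventually (eventually_gt_nhds (by linarith))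
    obtain ⟨T, hT⟩ := hev.exists_forall_of_atTop
    set T' : ℝ := max T 0 with hT'
    set c : ℝ := L * a 0 with hc
    have hcpos : 0 < c := mul_pos hL hapos
    set M : ℝ := max (a 0) (Y + b 0) with hM
    -- g := a - c·t is monotone on [T', ∞)
    have hgmono : MonotoneOn (fun t => a t - c * t) (Ici T') := by
      apply monotoneOn_of_deriv_nonneg (convex_Ici T')
      · exact (hacont.sub (continuous_const.mul continuous_id)).continuousOn
      · exact fun t _ => ((ha t).sub ((hasDerivAt_id t).const_mul c)).differentiableAt
          |>.differentiableWithinAt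
      · intro t ht
        rw [interior_Ici] at ht
        have hd : deriv (fun t => a t - c * t) t = 2 * (Y - a t + b t) * a t - c := by
          have := ((ha t).sub ((hasDerivAt_id t).const_mul c)).deriv
          rw [show (fun t => a t - c * t) = a - fun y => c * y from rfl]
          simpa using this
        rw [hd]
        have h1 : L / 2 < F t := hT t (le_trans (le_max_left T 0) ht.le)
        have h2 : a 0 ≤ a t := hamono.monotone (le_trans (le_max_right T 0) ht.le)
        simp only [hFdef] at h1
        nlinarith [hapos' t, hapos]
    have hM0 : 0 < M := lt_max_of_lt_left hapos
    have hdiv : 0 ≤ (M + 1) / c := div_nonneg (by linarith) hcpos.le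
    set t₁ : ℝ := T' + (M + 1) / c with ht₁
    have ht₁ge : T' ≤ t₁ := by rw [ht₁]; linarith
    have := hgmono (self_mem_Ici) (mem_Ici.2 ht₁ge) ht₁ge
    have hct : c * t₁ = c * T' + (M + 1) := by
      rw [ht₁, mul_add, mul_div_cancel₀ _ hcpos.ne']
    have h1 : a T' ≤ M := hMa T'
    have h2 : a t₁ ≤ M := hMa t₁
    have h3 : 0 < a T' := hapos' T'
    simp only at this
    nlinarith
  exact ⟨hamono.strictMonoOn _, ⟨Y + b 0, hbound⟩, hbanti.antitoneOn _,
    ass, bss, hass_pos, hL0, haconv, hbconv⟩
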